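/- Let Ω ⊆ ℝ³ be a bounded measurable set with diameter at most d, and let B : ℝ³ → ℝ³ be an integrable vector field vanishing outside Ω whose fourth power of the norm is integrable on Ω. Let A be the Biot–Savart vector potential of B. Then ∫_Ω ‖A(x)‖⁴ dx ≤ d⁴ · ∫_Ω ‖B(x)‖⁴ dx. -/

import Mathlib

open MeasureTheory Set Metric
open scoped ENNReal

noncomputable section

/-- The cross product of two vectors in Euclidean 3-space. -/
def cross3 (u v : EuclideanSpace ℝ (Fin 3)) : EuclideanSpace ℝ (Fin 3) :=
  (WithLp.equiv 2 (Fin 3 → ℝ)).symm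
    ![u 1 * v 2 - u 2 * v 1, u 2 * v 0 - u 0 * v 2, u 0 * v 1 - u 1 * v 0]

/-- The Biot–Savart vector potential of a field `B` supported in `Ω`:
`A(x) = (1/(4π)) ∫_Ω B(y) × (x − y)/‖x − y‖³ dy`. -/
def biotSavart (Ω : Set (EuclideanSpace ℝ (Fin 3)))
    (B : EuclideanSpace ℝ (Fin 3) → EuclideanSpace ℝ (Fin 3))
    (x : EuclideanSpace ℝ (Fin 3)) : EuclideanSpace ℝ (Fin 3) :=
  (1 / (4 * Real.pi)) • ∫ y in Ω, (‖x - y‖ ^ 3)⁻¹ • cross3 (B y) (x - y)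

namespace BiotSavartAux

abbrev E3 := EuclideanSpace ℝ (Fin 3)

lemma cross3_apply (u v : E3) (i : Fin 3) :
    cross3 u v i = ![u 1 * v 2 - u 2 * v 1, u 2 * v 0 - u 0 * v 2, u 0 * v 1 - u 1 * v 0] i := rfl

lemma euc_sq (w : E3) : ‖w‖^2 = w 0^2 + w 1^2 + w 2^2 := by
  rw [EuclideanSpace.norm_eq, Real.sq_sqrt (by positivity)]
  simp [Fin.sum_univ_three]

lemma norm_cross3_le (u v : E3) : ‖cross3 u v‖ ≤ ‖u‖ * ‖v‖ := by
  have h : ‖cross3 u v‖^2 ≤ (‖u‖ * ‖v‖)^2 := by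
    rw [euc_sq, mul_pow, euc_sq u, euc_sq v]
    simp only [cross3_apply]
    simp only [Matrix.cons_val_zero, Matrix.cons_val_one, Matrix.head_cons,
      Matrix.cons_val_two, Matrix.tail_cons]
    nlinarith [sq_nonneg (u 0 * v 0 + u 1 * v 1 + u 2 * v 2)]
  exact (pow_le_pow_iff_left₀ (norm_nonneg _) (by positivity) two_ne_zero).mp h

lemma lintegral_fun_norm_polar {E : Type*} [NormedAddCommGroup E] [NormedSpace ℝ E]
    [MeasurableSpace E] [BorelSpace E] [Nontrivial E] [FiniteDimensional ℝ E]
    (μ : Measure E) [μ.IsAddHaarMeasure] (g : ℝ → ℝ≥0∞) (hg : Measurable g) :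
    ∫⁻ x, g ‖x‖ ∂μ = μ.toSphere univ *
      ∫⁻ y in Ioi (0:ℝ), ENNReal.ofReal (y ^ (Module.finrank ℝ E - 1)) * g y := by
  set n := Module.finrank ℝ E - 1 with hn
  have h1 : ∫⁻ x, g ‖x‖ ∂μ = ∫⁻ x : ({(0:E)}ᶜ : Set E), g ‖x.1‖ ∂(μ.comap (↑)) := by
    rw [lintegral_subtype_comap (measurableSet_singleton (0:E)).compl
      (fun x : E => g ‖x‖), MeasureTheory.restrict_compl_singleton]
  have h2 := (μ.measurePreserving_homeomorphUnitSphereProd).lintegral_comp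
    (f := fun p : sphere (0:E) 1 × Ioi (0:ℝ) => g p.2.1)
    (hg.comp (measurable_subtype_coe.comp measurable_snd))
  have h2' : ∫⁻ x : ({(0:E)}ᶜ : Set E), g ‖x.1‖ ∂(μ.comap (↑)) =
      ∫⁻ p : sphere (0:E) 1 × Ioi (0:ℝ), g p.2.1
        ∂(μ.toSphere.prod (.volumeIoiPow n)) := by
    rw [← h2]; congr 1
    funext x; simp only [homeomorphUnitSphereProd_apply_snd_coe]
  have h3 : ∫⁻ p : sphere (0:E) 1 × Ioi (0:ℝ), g p.2.1
        ∂(μ.toSphere.prod (.volumeIoiPow n)) =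
      μ.toSphere univ * ∫⁻ r : Ioi (0:ℝ), g r.1 ∂(Measure.volumeIoiPow n) := by
    have := lintegral_prod_mul (μ := μ.toSphere) (ν := Measure.volumeIoiPow n)
      (f := fun _ : sphere (0:E) 1 => (1:ℝ≥0∞)) (g := fun r : Ioi (0:ℝ) => g r.1)
      aemeasurable_const ((hg.comp measurable_subtype_coe).aemeasurable)
    simpa using this
  have h4 : ∫⁻ r : Ioi (0:ℝ), g r.1 ∂(Measure.volumeIoiPow n) =
      ∫⁻ y in Ioi (0:ℝ), ENNReal.ofReal (y ^ n) * g y := by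
    calc ∫⁻ r : Ioi (0:ℝ), g r.1 ∂(Measure.volumeIoiPow n)
        = ∫⁻ r : Ioi (0:ℝ), ENNReal.ofReal (r.1 ^ n) * g r.1
            ∂(Measure.comap Subtype.val volume) := by
          exact lintegral_withDensity_eq_lintegral_mul _
            ((measurable_subtype_coe.pow_const _).ennreal_ofReal)
            (hg.comp measurable_subtype_coe)
      _ = ∫⁻ y in Ioi (0:ℝ), ENNReal.ofReal (y ^ n) * g y :=
          lintegral_subtype_comap measurableSet_Ioi
            (fun y : ℝ => ENNReal.ofReal (y ^ n) * g y)
  rw [h1, h2', h3, h4]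

lemma toSphere_univ_E3 : (volume : Measure E3).toSphere univ = ENNReal.ofReal (4 * Real.pi) := by
  rw [Measure.toSphere_apply_univ, EuclideanSpace.volume_ball]
  have hcard : (Fintype.card (Fin 3) : ℝ) = 3 := by simp
  have hG : Real.Gamma ((Fintype.card (Fin 3) : ℝ) / 2 + 1) = 3 / 4 * Real.sqrt Real.pi := by
    rw [hcard]
    have h32 : (3:ℝ)/2 = 1/2 + 1 := by norm_num
    rw [Real.Gamma_add_one (by norm_num), h32, Real.Gamma_add_one (by norm_num),
      Real.Gamma_one_half_eq]
    ring
  have hfr : Module.finrank ℝ E3 = 3 := finrank_euclideanSpace_fin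
  rw [hG, hfr]
  have hsq : Real.sqrt Real.pi ^ Fintype.card (Fin 3) = Real.pi * Real.sqrt Real.pi := by
    have : Fintype.card (Fin 3) = 3 := by simp
    rw [this, pow_succ, pow_two, Real.mul_self_sqrt Real.pi_nonneg]
  rw [hsq]
  have hs : Real.sqrt Real.pi > 0 := Real.sqrt_pos.mpr Real.pi_pos
  have : Real.pi * Real.sqrt Real.pi / (3 / 4 * Real.sqrt Real.pi) = 4 / 3 * Real.pi := by
    field_simp
  rw [this]
  simp only [ENNReal.ofReal_one, one_pow, one_mul]
  rw [show ((3:ℕ):ℝ≥0∞) = ENNReal.ofReal (3:ℝ) by norm_num,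
    ← ENNReal.ofReal_mul (by norm_num)]
  congr 1
  ring

lemma ball_kernel (d : ℝ) (hd : 0 ≤ d) (x : E3) :
    ∫⁻ y in closedBall x d, ENNReal.ofReal ((‖x - y‖^2)⁻¹) =
      ENNReal.ofReal (4 * Real.pi * d) := by
  set F : E3 → ℝ≥0∞ := (closedBall (0:E3) d).indicator (fun w => ENNReal.ofReal ((‖w‖^2)⁻¹))
    with hF
  have hFmeas : Measurable F := by
    apply Measurable.indicator _ measurableSet_closedBall
    exact ((continuous_norm.pow 2).measurable.inv).ennreal_ofReal
  have step1 : ∫⁻ y in closedBall x d, ENNReal.ofReal ((‖x - y‖^2)⁻¹) =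
      ∫⁻ y, F (x - y) := by
    rw [← lintegral_indicator measurableSet_closedBall]
    congr 1
    ext y
    by_cases hy : y ∈ closedBall x d
    · have hy' : x - y ∈ closedBall (0:E3) d := by
        rw [mem_closedBall_zero_iff]
        rw [mem_closedBall, dist_eq_norm, ← norm_neg, neg_sub] at hy
        exact hy
      simp [hF, indicator_of_mem, hy, hy']
    · have hy' : x - y ∉ closedBall (0:E3) d := by
        rw [mem_closedBall_zero_iff]
        rw [mem_closedBall, dist_eq_norm, ← norm_neg, neg_sub] at hy
        exact hy
      simp [hF, indicator_of_notMem, hy, hy']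
  have step2 : ∫⁻ y, F (x - y) = ∫⁻ w, F w :=
    (Measure.measurePreserving_sub_left volume x).lintegral_comp hFmeas
  set g : ℝ → ℝ≥0∞ := fun r => if r ≤ d then ENNReal.ofReal ((r^2)⁻¹) else 0 with hg
  have hgmeas : Measurable g := by
    apply Measurable.ite measurableSet_Iic _ measurable_const
    exact ((measurable_id.pow_const 2).inv).ennreal_ofReal
  have step3 : ∫⁻ w, F w = ∫⁻ w : E3, g ‖w‖ := by
    congr 1
    ext w
    by_cases hw : ‖w‖ ≤ d
    · simp [hF, hg, indicator_of_mem, mem_closedBall_zero_iff.mpr hw, hw]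
    · simp [hF, hg, indicator_of_notMem (fun h => hw (mem_closedBall_zero_iff.mp h)), hw]
  have step4 : ∫⁻ w : E3, g ‖w‖ = ENNReal.ofReal (4 * Real.pi) *
      ∫⁻ y in Ioi (0:ℝ), ENNReal.ofReal (y ^ 2) * g y := by
    rw [lintegral_fun_norm_polar volume g hgmeas, toSphere_univ_E3]
    norm_num [finrank_euclideanSpace_fin]
  have step5 : ∫⁻ y in Ioi (0:ℝ), ENNReal.ofReal (y ^ 2) * g y = ENNReal.ofReal d := by
    have hcong : ∀ y ∈ Ioi (0:ℝ), ENNReal.ofReal (y ^ 2) * g y =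
        (Ioc (0:ℝ) d).indicator (fun _ => (1:ℝ≥0∞)) y := by
      intro y hy
      rw [mem_Ioi] at hy
      by_cases hyd : y ≤ d
      · rw [hg]
        simp only [hyd, if_true, indicator_of_mem (mem_Ioc.mpr ⟨hy, hyd⟩)]
        rw [← ENNReal.ofReal_mul (by positivity)]
        rw [mul_inv_cancel₀ (by positivity)]
        simp
      · rw [hg]
        simp only [hyd, if_false, mul_zero]
        rw [indicator_of_notMem (fun h => hyd (mem_Ioc.mp h).2)]
    rw [setLIntegral_congr_fun measurableSet_Ioi hcong,
      lintegral_indicator measurableSet_Ioc, Measure.restrict_restrict measurableSet_Ioc]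
    have : Ioc (0:ℝ) d ∩ Ioi (0:ℝ) = Ioc 0 d := by
      ext t
      constructor
      · rintro ⟨h, -⟩; exact h
      · rintro h; exact ⟨h, h.1⟩
    rw [this]
    simp [Real.volume_Ioc, hd]
  rw [step1, step2, step3, step4, step5, ← ENNReal.ofReal_mul (by positivity)]

end BiotSavartAux

open BiotSavartAux

theorem biotSavart_L4_bound (Ω : Set (EuclideanSpace ℝ (Fin 3)))
    (hΩ : MeasurableSet Ω) (hΩb : Bornology.IsBounded Ω)
    (d : ℝ) (hd : Metric.diam Ω ≤ d)
    (B : EuclideanSpace ℝ (Fin 3) → EuclideanSpace ℝ (Fin 3))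
    (hB : Integrable B) (hB0 : ∀ x ∉ Ω, B x = 0)
    (hB4 : IntegrableOn (fun x => ‖B x‖ ^ 4) Ω) :
    ∫ x in Ω, ‖biotSavart Ω B x‖ ^ 4 ≤ d ^ 4 * ∫ x in Ω, ‖B x‖ ^ 4 := by
  have hd0 : (0:ℝ) ≤ d := Metric.diam_nonneg.trans hd
  set K : E3 → E3 → ℝ≥0∞ := fun x y => ENNReal.ofReal ((‖x - y‖^2)⁻¹) with hK
  set c : ℝ≥0∞ := ENNReal.ofReal (1/(4*Real.pi)) with hc
  set κ : ℝ≥0∞ := ENNReal.ofReal (4*Real.pi*d) with hκ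
  -- kernel bounds
  have hker : ∀ x ∈ Ω, ∫⁻ y in Ω, K x y ≤ κ := by
    intro x hx
    have hsub : Ω ⊆ closedBall x d := fun y hy =>
      mem_closedBall'.mpr ((Metric.dist_le_diam_of_mem hΩb hx hy).trans hd)
    calc ∫⁻ y in Ω, K x y ≤ ∫⁻ y in closedBall x d, K x y :=
          lintegral_mono' (Measure.restrict_mono hsub le_rfl) le_rfl
      _ = κ := ball_kernel d hd0 x
  have hker' : ∀ y ∈ Ω, ∫⁻ x in Ω, K x y ≤ κ := by
    intro y hy
    have : ∀ x, K x y = K y x := by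
      intro x; simp only [hK, norm_sub_rev]
    simp_rw [this]
    exact hker y hy
  -- measurability
  have hKmx : ∀ x, Measurable (K x) := by
    intro x
    apply Measurable.ennreal_ofReal
    exact (((continuous_const.sub continuous_id).norm.pow 2).measurable).inv
  have hKmy : ∀ y, Measurable (fun x => K x y) := by
    intro y
    apply Measurable.ennreal_ofReal
    exact (((continuous_id.sub continuous_const).norm.pow 2).measurable).inv
  have hBm : AEMeasurable B (volume : Measure E3) := hB.aestronglyMeasurable.aemeasurable
  have hBn : AEMeasurable (fun y => ‖B y‖) (volume : Measure E3) := hBm.norm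
  -- the integrand of the Biot–Savart integral and its pointwise bound
  set f : E3 → E3 → E3 := fun x y => (‖x - y‖ ^ 3)⁻¹ • cross3 (B y) (x - y) with hf
  have hfnorm : ∀ x y, ‖f x y‖ ≤ ‖B y‖ * (‖x - y‖^2)⁻¹ := by
    intro x y
    rcases eq_or_ne x y with rfl | hxy
    · simp [hf]
    · have hpos : 0 < ‖x - y‖ := norm_pos_iff.mpr (sub_ne_zero.mpr hxy)
      rw [hf]
      calc ‖(‖x - y‖ ^ 3)⁻¹ • cross3 (B y) (x - y)‖
          = (‖x - y‖ ^ 3)⁻¹ * ‖cross3 (B y) (x - y)‖ := by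
            rw [norm_smul, Real.norm_eq_abs, abs_of_nonneg (by positivity)]
        _ ≤ (‖x - y‖ ^ 3)⁻¹ * (‖B y‖ * ‖x - y‖) := by
            exact mul_le_mul_of_nonneg_left (norm_cross3_le _ _) (by positivity)
        _ = ‖B y‖ * (‖x - y‖^2)⁻¹ := by
            field_simp
  set G : E3 → ℝ≥0∞ := fun x => ∫⁻ y in Ω, ENNReal.ofReal ‖B y‖ * K x y with hG
  set H : E3 → ℝ≥0∞ := fun x => ∫⁻ y in Ω, ENNReal.ofReal (‖B y‖^4) * K x y with hH
  -- Step A: pointwise bound on the potential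
  have hA : ∀ x, ENNReal.ofReal ‖biotSavart Ω B x‖ ≤ c * G x := by
    intro x
    set L : ℝ≥0∞ := ∫⁻ y in Ω, ENNReal.ofReal ‖f x y‖ with hL
    have h1 : ‖biotSavart Ω B x‖ ≤ (1/(4*Real.pi)) * L.toReal := by
      rw [biotSavart, norm_smul, Real.norm_eq_abs,
        abs_of_nonneg (by positivity : (0:ℝ) ≤ 1/(4*Real.pi))]
      exact mul_le_mul_of_nonneg_left (norm_integral_le_lintegral_norm _) (by positivity)
    have h2 : L ≤ G x := by
      apply lintegral_mono
      intro y
      calc ENNReal.ofReal ‖f x y‖ ≤ ENNReal.ofReal (‖B y‖ * (‖x - y‖^2)⁻¹) :=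
            ENNReal.ofReal_le_ofReal (hfnorm x y)
        _ = ENNReal.ofReal ‖B y‖ * K x y := ENNReal.ofReal_mul (norm_nonneg _)
    by_cases hGtop : G x = ⊤
    · rw [hGtop]
      have hc0 : c ≠ 0 := by
        rw [hc]
        simp only [ne_eq, ENNReal.ofReal_eq_zero, not_le]
        positivity
      rw [ENNReal.mul_top hc0]
      exact le_top
    · have hLne : L ≠ ⊤ := (lt_of_le_of_lt h2 (lt_top_iff_ne_top.mpr hGtop)).ne
      calc ENNReal.ofReal ‖biotSavart Ω B x‖
          ≤ ENNReal.ofReal ((1/(4*Real.pi)) * L.toReal) := ENNReal.ofReal_le_ofReal h1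
        _ = c * ENNReal.ofReal L.toReal := ENNReal.ofReal_mul (by positivity)
        _ = c * L := by rw [ENNReal.ofReal_toReal hLne]
        _ ≤ c * G x := mul_le_mul_right h2 _
  -- Step B : Hölder
  have hHolder : ∀ x, G x ≤ (H x) ^ ((1:ℝ)/4) * (∫⁻ y in Ω, K x y) ^ ((3:ℝ)/4) := by
    intro x
    have hconj : Real.HolderConjugate 4 (4/3) := ⟨by norm_num, by norm_num, by norm_num⟩
    set φ : E3 → ℝ≥0∞ := fun y => ENNReal.ofReal ‖B y‖ * (K x y) ^ ((1:ℝ)/4) with hφ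
    set ψ : E3 → ℝ≥0∞ := fun y => (K x y) ^ ((3:ℝ)/4) with hψ
    have hφm : AEMeasurable φ (volume.restrict Ω) :=
      (hBn.restrict.ennreal_ofReal).mul ((hKmx x).pow_const _).aemeasurable
    have hψm : AEMeasurable ψ (volume.restrict Ω) :=
      ((hKmx x).pow_const _).aemeasurable
    have key := ENNReal.lintegral_mul_le_Lp_mul_Lq (volume.restrict Ω) hconj hφm hψm
    have e1 : ∀ y, (φ * ψ) y = ENNReal.ofReal ‖B y‖ * K x y := by
      intro y
      show φ y * ψ y = _
      rw [hφ, hψ]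
      rw [mul_assoc, ← ENNReal.rpow_add_of_nonneg _ _ (by norm_num) (by norm_num)]
      norm_num
    have e2 : ∀ y, φ y ^ (4:ℝ) = ENNReal.ofReal (‖B y‖^4) * K x y := by
      intro y
      rw [hφ, ENNReal.mul_rpow_of_nonneg _ _ (by norm_num), ← ENNReal.rpow_mul]
      norm_num
    have e3 : ∀ y, ψ y ^ ((4:ℝ)/3) = K x y := by
      intro y
      rw [hψ, ← ENNReal.rpow_mul]
      norm_num
    calc G x = ∫⁻ y in Ω, (φ * ψ) y := by
          rw [hG]; exact (lintegral_congr e1).symm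
      _ ≤ (∫⁻ y in Ω, φ y ^ (4:ℝ)) ^ ((1:ℝ)/4) * (∫⁻ y in Ω, ψ y ^ ((4:ℝ)/3)) ^ ((1:ℝ)/(4/3)) :=
          key
      _ = (H x) ^ ((1:ℝ)/4) * (∫⁻ y in Ω, K x y) ^ ((3:ℝ)/4) := by
          rw [lintegral_congr e2, lintegral_congr e3]
          rw [show (1:ℝ)/(4/3) = 3/4 by norm_num]
  -- assembling the pointwise fourth-power bound
  have hA4 : ∀ x ∈ Ω, ENNReal.ofReal (‖biotSavart Ω B x‖^4) ≤ c^4 * κ^3 * H x := by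
    intro x hx
    have e1 : ENNReal.ofReal (‖biotSavart Ω B x‖^4) =
        (ENNReal.ofReal ‖biotSavart Ω B x‖) ^ (4:ℕ) := by
      rw [← ENNReal.ofReal_pow (norm_nonneg _)]
    rw [e1]
    calc (ENNReal.ofReal ‖biotSavart Ω B x‖) ^ (4:ℕ)
        ≤ (c * G x) ^ (4:ℕ) := pow_le_pow_left' (hA x) 4
      _ ≤ (c * ((H x) ^ ((1:ℝ)/4) * κ ^ ((3:ℝ)/4))) ^ (4:ℕ) := by
          apply pow_le_pow_left'
          apply mul_le_mul_right
          calc G x ≤ (H x) ^ ((1:ℝ)/4) * (∫⁻ y in Ω, K x y) ^ ((3:ℝ)/4) := hHolder x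
            _ ≤ (H x) ^ ((1:ℝ)/4) * κ ^ ((3:ℝ)/4) :=
                mul_le_mul_right (ENNReal.rpow_le_rpow (hker x hx) (by norm_num)) _
      _ = c^4 * κ^3 * H x := by
          rw [mul_pow, mul_pow]
          have h1 : ((H x) ^ ((1:ℝ)/4)) ^ (4:ℕ) = H x := by
            rw [← ENNReal.rpow_natCast (_ ^ _), ← ENNReal.rpow_mul]
            norm_num
          have h2 : (κ ^ ((3:ℝ)/4)) ^ (4:ℕ) = κ ^ (3:ℕ) := by
            rw [← ENNReal.rpow_natCast (_ ^ ((3:ℝ)/4)), ← ENNReal.rpow_mul]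
            norm_num
          rw [h1, h2]
          ring
  -- joint measurability for Tonelli
  have hjoint : AEMeasurable (Function.uncurry fun x y => ENNReal.ofReal (‖B y‖^4) * K x y)
      ((volume.restrict Ω).prod (volume.restrict Ω)) := by
    apply AEMeasurable.mul (f := fun p : E3 × E3 => ENNReal.ofReal (‖B p.2‖^4)) (g := fun p : E3 × E3 => K p.1 p.2)
    · exact ((hBn.restrict.pow_const 4).ennreal_ofReal).comp_snd
    · apply Measurable.aemeasurable
      apply Measurable.ennreal_ofReal
      exact (((continuous_fst.sub continuous_snd).norm.pow 2).measurable).inv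
  have hfin : c^4 * κ^3 ≠ ⊤ := by
    apply ENNReal.mul_ne_top <;> exact ENNReal.pow_ne_top ENNReal.ofReal_ne_top
  -- main lintegral chain
  have hmain : ∫⁻ x in Ω, ENNReal.ofReal (‖biotSavart Ω B x‖^4) ≤
      (c * κ)^4 * ∫⁻ y in Ω, ENNReal.ofReal (‖B y‖^4) := by
    calc ∫⁻ x in Ω, ENNReal.ofReal (‖biotSavart Ω B x‖^4)
        ≤ ∫⁻ x in Ω, c^4 * κ^3 * H x := by
          apply lintegral_mono_ae
          filter_upwards [ae_restrict_mem hΩ] with x hx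
          exact hA4 x hx
      _ = c^4 * κ^3 * ∫⁻ x in Ω, H x := lintegral_const_mul' _ _ hfin
      _ = c^4 * κ^3 * ∫⁻ y in Ω, ∫⁻ x in Ω, ENNReal.ofReal (‖B y‖^4) * K x y := by
          rw [hH]
          rw [lintegral_lintegral_swap hjoint]
      _ = c^4 * κ^3 * ∫⁻ y in Ω, ENNReal.ofReal (‖B y‖^4) * ∫⁻ x in Ω, K x y := by
          congr 1
          apply lintegral_congr
          intro y
          exact lintegral_const_mul' _ _ ENNReal.ofReal_ne_top
      _ ≤ c^4 * κ^3 * ∫⁻ y in Ω, ENNReal.ofReal (‖B y‖^4) * κ := by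
          apply mul_le_mul_right
          apply lintegral_mono_ae
          filter_upwards [ae_restrict_mem hΩ] with y hy
          exact mul_le_mul_right (hker' y hy) _
      _ = c^4 * κ^3 * ((∫⁻ y in Ω, ENNReal.ofReal (‖B y‖^4)) * κ) := by
          rw [lintegral_mul_const' _ _ ENNReal.ofReal_ne_top]
      _ = (c * κ)^4 * ∫⁻ y in Ω, ENNReal.ofReal (‖B y‖^4) := by ring
  -- identify the right-hand side
  have hBint : ∫⁻ y in Ω, ENNReal.ofReal (‖B y‖^4) =
      ENNReal.ofReal (∫ y in Ω, ‖B y‖^4) := by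
    rw [MeasureTheory.ofReal_integral_eq_lintegral_ofReal hB4
      (ae_of_all _ fun y => by positivity)]
  have hcκ : c * κ = ENNReal.ofReal d := by
    rw [hc, hκ, ← ENNReal.ofReal_mul (by positivity)]
    congr 1
    have hπ : Real.pi ≠ 0 := Real.pi_ne_zero
    field_simp
  -- measurability of the potential
  have hAmeas : AEStronglyMeasurable (fun x => biotSavart Ω B x) (volume.restrict Ω) := by
    have hjm : AEStronglyMeasurable (fun p : E3 × E3 => f p.1 p.2)
        ((volume.restrict Ω).prod (volume.restrict Ω)) := by
      rw [aestronglyMeasurable_iff_aemeasurable]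
      have hsub : Measurable (fun p : E3 × E3 => p.1 - p.2) := measurable_fst.sub measurable_snd
      have hBsnd : AEMeasurable (fun p : E3 × E3 => B p.2)
          ((volume.restrict Ω).prod (volume.restrict Ω)) := hBm.restrict.comp_snd
      have hscal : Measurable (fun p : E3 × E3 => (‖p.1 - p.2‖ ^ 3)⁻¹) :=
        ((hsub.norm.pow_const 3)).inv
      apply AEMeasurable.smul hscal.aemeasurable
      have hcross : Measurable (fun q : E3 × E3 => cross3 q.1 q.2) := by
        apply (PiLp.continuous_toLp 2 _).measurable.comp
        apply measurable_pi_lambda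
        intro i
        have hj1 : ∀ j : Fin 3, Measurable (fun q : E3 × E3 => q.1 j) :=
          fun j => by fun_prop
        have hj2 : ∀ j : Fin 3, Measurable (fun q : E3 × E3 => q.2 j) :=
          fun j => by fun_prop
        fin_cases i
        · exact ((hj1 1).mul (hj2 2)).sub ((hj1 2).mul (hj2 1))
        · exact ((hj1 2).mul (hj2 0)).sub ((hj1 0).mul (hj2 2))
        · exact ((hj1 0).mul (hj2 1)).sub ((hj1 1).mul (hj2 0))
      exact hcross.comp_aemeasurable (hBsnd.prodMk hsub.aemeasurable)
    have hint : AEStronglyMeasurable (fun x => ∫ y in Ω, f x y) (volume.restrict Ω) :=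
      hjm.integral_prod_right'
    unfold biotSavart
    exact (hint.const_smul (1 / (4 * Real.pi)) :)
  have hA4meas : AEStronglyMeasurable (fun x => ‖biotSavart Ω B x‖^4) (volume.restrict Ω) :=
    (hAmeas.norm.pow 4)
  -- conclusion
  have hI0 : 0 ≤ ∫ y in Ω, ‖B y‖^4 :=
    integral_nonneg fun y => by positivity
  rw [integral_eq_lintegral_of_nonneg_ae (ae_of_all _ fun x => by positivity) hA4meas]
  apply ENNReal.toReal_le_of_le_ofReal (by positivity)
  calc ∫⁻ x in Ω, ENNReal.ofReal (‖biotSavart Ω B x‖^4)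
      ≤ (c * κ)^4 * ∫⁻ y in Ω, ENNReal.ofReal (‖B y‖^4) := hmain
    _ = (ENNReal.ofReal d)^4 * ENNReal.ofReal (∫ y in Ω, ‖B y‖^4) := by rw [hcκ, hBint]
    _ = ENNReal.ofReal (d^4 * ∫ y in Ω, ‖B y‖^4) := by
        rw [← ENNReal.ofReal_pow hd0, ← ENNReal.ofReal_mul (by positivity)]

end
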